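/- Let 0 < α < 1 and let the discrete convolution kernels A^{(n)}_{n−k} be positive, monotone (A^{(n)}_{n−k−1} ≥ A^{(n)}_{n−k} > 0), and satisfy the lower bound A^{(n)}_{n−k} ≥ (1/π_a)·(1/τ_k) ∫_{t_{k−1}}^{t_k} ω_{1−α}(t_n − s) ds for some constant π_a > 0 and all 1 ≤ k ≤ n ≤ N. Let p^{(n)}_{n−j} be the associated complementary kernels. Then for m = 0 and m = 1 and for every 1 ≤ n ≤ N, Σ_{j=1}^{n} p^{(n)}_{n−j} ω_{1+mα−α}(t_j) ≤ π_a ω_{1+mα}(t_n). -/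

import Mathlib

/-!
STATEMENT 12: weighted bound for the complementary kernels,
`Σ_{j=1}^n p^{(n)}_{n−j} ω_{1+mα−α}(t_j) ≤ π_a ω_{1+mα}(t_n)` for `m = 0, 1`.
Throughout, `A n k` denotes the kernel `A^{(n)}_{n−k}` (the coefficient of
the step `k`).
-/

open Real MeasureTheory

/-- `ω_μ(s) := s^{μ−1}/Γ(μ)`. -/
noncomputable def omega (μ s : ℝ) : ℝ := s ^ (μ - 1) / Real.Gamma μ

/-- The nonuniform L1 kernel `a^{(n)}_{n−k}` (step-indexed). -/
noncomputable def L1kernel (α : ℝ) (t : ℕ → ℝ) (n k : ℕ) : ℝ :=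
  (1 / (t k - t (k - 1))) * ∫ s in (t (k - 1))..(t k), omega (1 - α) (t n - s)

/-- The discrete complementary convolution kernels `p^{(n)}_m` associated with
a family of kernels.  Here `A n k` denotes the kernel `A^{(n)}_{n−k}`
(the coefficient of the step `k` in `Σ_{k=1}^n A^{(n)}_{n−k} ∇v^k`), and
`compP A n m = p^{(n)}_m`, defined by `p^{(n)}_0 := 1/A^{(n)}_0` and, for
`j = n − (m+1)`,
`p^{(n)}_{n−j} := (1/A^{(j)}_0) Σ_{k=j+1}^n (A^{(k)}_{k−j−1} − A^{(k)}_{k−j}) p^{(n)}_{n−k}`;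
note `A^{(j)}_0 = A j j`, `A^{(k)}_{k−j} = A k j` and `A^{(k)}_{k−j−1} = A k (j+1)`. -/
noncomputable def compP (A : ℕ → ℕ → ℝ) (n : ℕ) : ℕ → ℝ
  | 0 => 1 / A n n
  | (m + 1) =>
      (1 / A (n - (m + 1)) (n - (m + 1))) *
        ∑ k ∈ (Finset.Icc (n - (m + 1) + 1) n).attach,
          (A k.1 (n - (m + 1) + 1) - A k.1 (n - (m + 1))) * compP A n (n - k.1)
  decreasing_by
    have hk := Finset.mem_Icc.mp k.2
    omega

/-! ### auxiliary lemmas -/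

lemma compP_succ (A : ℕ → ℕ → ℝ) (n m : ℕ) :
    compP A n (m+1) = (1 / A (n - (m + 1)) (n - (m + 1))) *
        ∑ k ∈ (Finset.Icc (n - (m + 1) + 1) n),
          (A k (n - (m + 1) + 1) - A k (n - (m + 1))) * compP A n (n - k) := by
  rw [compP]
  rw [← Finset.sum_attach (Finset.Icc (n - (m + 1) + 1) n)
    (fun k => (A k (n - (m + 1) + 1) - A k (n - (m + 1))) * compP A n (n - k))]

lemma Icc_insert' (k n : ℕ) (h : k ≤ n) :
    Finset.Icc k n = insert k (Finset.Icc (k+1) n) := by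
  ext x; simp [Finset.mem_Icc]; omega

/-- complementary identity: `∑_{j=k}^n p^{(n)}_{n-j} A^{(j)}_{j-k} = 1`. -/
lemma comp_sum (A : ℕ → ℕ → ℝ) (n : ℕ) (hA : ∀ j, 1 ≤ j → j ≤ n → A j j ≠ 0) :
    ∀ d k, 1 ≤ k → n = k + d →
      ∑ j ∈ Finset.Icc k n, compP A n (n - j) * A j k = 1 := by
  intro d
  induction d with
  | zero =>
      intro k hk1 hkn
      subst hkn
      simp only [Nat.add_zero, Finset.Icc_self, Finset.sum_singleton, Nat.sub_self]
      rw [compP]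
      rw [one_div, inv_mul_eq_div, div_self (hA _ hk1 (le_refl _))]
  | succ d ih =>
      intro k hk1 hkn
      have hkn' : k ≤ n := by omega
      have hnk : n - k = (d : ℕ) + 1 := by omega
      have hj : n - (d + 1) = k := by omega
      rw [Icc_insert' k n hkn', Finset.sum_insert (by simp), hnk, compP_succ, hj]
      have hArw : (1 / A k k) * (∑ j ∈ Finset.Icc (k+1) n,
          (A j (k+1) - A j k) * compP A n (n - j)) * A k k
          = ∑ j ∈ Finset.Icc (k+1) n, (A j (k+1) - A j k) * compP A n (n - j) := by
        field_simp [hA k hk1 hkn']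
      rw [hArw, ← Finset.sum_add_distrib]
      have : ∀ j ∈ Finset.Icc (k+1) n,
          (A j (k+1) - A j k) * compP A n (n - j) + compP A n (n - j) * A j k
          = compP A n (n - j) * A j (k+1) := by
        intro j _; ring
      rw [Finset.sum_congr rfl this]
      exact ih (k+1) (by omega) (by omega)

/-- nonnegativity of the complementary kernels -/
lemma compP_nonneg (A : ℕ → ℕ → ℝ) (N n : ℕ) (hn1 : 1 ≤ n) (hnN : n ≤ N)
    (hApos : ∀ n k, 1 ≤ k → k ≤ n → n ≤ N → 0 < A n k)
    (hAmono : ∀ n k, 1 ≤ k → k + 1 ≤ n → n ≤ N → A n k ≤ A n (k + 1)) :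
    ∀ m, m + 1 ≤ n → 0 ≤ compP A n m := by
  intro m
  induction m using Nat.strong_induction_on with
  | _ m ih =>
    intro hmn
    cases m with
    | zero =>
        rw [compP]
        exact div_nonneg zero_le_one (hApos n n hn1 le_rfl hnN).le
    | succ m =>
        rw [compP_succ]
        have hj1 : 1 ≤ n - (m+1) := by omega
        apply mul_nonneg
        · exact div_nonneg zero_le_one (hApos _ _ hj1 le_rfl (by omega)).le
        · apply Finset.sum_nonneg
          intro k hk
          have hk' := Finset.mem_Icc.mp hk
          apply mul_nonneg
          · have h := hAmono k (n - (m+1)) hj1 (by omega) (by omega)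
            linarith
          · exact ih (n - k) (by omega) (by omega)

lemma sum_Icc_shift (f : ℕ → ℝ) (n : ℕ) :
    ∑ k ∈ Finset.Icc 1 n, f k = ∑ i ∈ Finset.range n, f (i+1) := by
  rw [← Finset.Ico_add_one_right_eq_Icc, Finset.sum_Ico_eq_sum_range]
  exact Finset.sum_congr rfl (fun i _ => by rw [add_comm])

lemma mesh_lt {N : ℕ} {t : ℕ → ℝ} (hmesh : ∀ k, k < N → t k < t (k + 1)) :
    ∀ i j, i < j → j ≤ N → t i < t j := by
  intro i j
  induction j with
  | zero => intro h _; omega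
  | succ j ih =>
      intro hij hjN
      rcases Nat.lt_or_ge i j with h | h
      · exact lt_trans (ih h (by omega)) (hmesh j (by omega))
      · have : i = j := by omega
        subst this
        exact hmesh i (by omega)

section Beta
variable {α : ℝ} (hα0 : 0 < α) (hα1 : α < 1)
include hα0 hα1

lemma beta_integrable (x : ℝ) (hx : 0 < x) :
    IntervalIntegrable (fun s => s ^ (α-1) * (x-s) ^ (-α)) volume 0 x := by
  have h1 : IntervalIntegrable (fun s => s ^ (α-1) * (x-s) ^ (-α)) volume 0 (x/2) := by
    apply IntervalIntegrable.mul_continuousOn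
    · exact intervalIntegral.intervalIntegrable_rpow' (by linarith)
    · apply ContinuousOn.rpow_const
      · exact (continuous_const.sub continuous_id).continuousOn
      · intro s hs
        rw [Set.uIcc_of_le (by linarith)] at hs
        left; intro h; nlinarith [hs.2]
  have h2 : IntervalIntegrable (fun s => s ^ (α-1) * (x-s) ^ (-α)) volume (x/2) x := by
    apply IntervalIntegrable.continuousOn_mul (g := fun s => s ^ (α-1))
    · have := (intervalIntegral.intervalIntegrable_rpow' (a := x - x/2) (b := x - x)
        (r := -α) (by linarith)).comp_sub_left x
      simpa using this
    · apply ContinuousOn.rpow_const continuous_id.continuousOn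
      intro s hs
      rw [Set.uIcc_of_le (by linarith)] at hs
      left; intro h; simp only [id_eq] at h; nlinarith [hs.1]
  exact h1.trans h2

lemma beta_value (x : ℝ) (hx : 0 < x) :
    ∫ s in (0:ℝ)..x, s ^ (α-1) * (x-s) ^ (-α) = Real.Gamma α * Real.Gamma (1-α) := by
  have hc : ∫ s in (0:ℝ)..x, ((s:ℂ) ^ ((α:ℂ)-1) * ((x:ℂ)-(s:ℂ)) ^ (((1-α:ℝ):ℂ)-1))
      = ((x:ℂ)) ^ ((α:ℂ)+((1-α:ℝ):ℂ)-1) * Complex.betaIntegral α ((1-α:ℝ)) :=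
    Complex.betaIntegral_scaled (α:ℂ) ((1-α:ℝ):ℂ) hx
  have hG : Complex.betaIntegral (α:ℂ) ((1-α:ℝ):ℂ)
      = ((Real.Gamma α * Real.Gamma (1-α) : ℝ) : ℂ) := by
    have := Complex.Gamma_mul_Gamma_eq_betaIntegral
      (s := (α:ℂ)) (t := ((1-α:ℝ):ℂ)) (by simpa using hα0) (by simp; linarith)
    rw [show (α:ℂ) + ((1-α:ℝ):ℂ) = 1 by push_cast; ring, Complex.Gamma_one, one_mul] at this
    rw [← this, Complex.Gamma_ofReal, Complex.Gamma_ofReal, ← Complex.ofReal_mul]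
  have hexp : ((x:ℂ)) ^ ((α:ℂ)+((1-α:ℝ):ℂ)-1) = 1 := by
    rw [show (α:ℂ)+((1-α:ℝ):ℂ)-1 = 0 by push_cast; ring, Complex.cpow_zero]
  rw [hexp, one_mul, hG] at hc
  have hre : ∫ s in (0:ℝ)..x, ((s:ℂ) ^ ((α:ℂ)-1) * ((x:ℂ)-(s:ℂ)) ^ (((1-α:ℝ):ℂ)-1))
      = ((∫ s in (0:ℝ)..x, s ^ (α-1) * (x-s) ^ (-α) : ℝ) : ℂ) := by
    rw [← intervalIntegral.integral_ofReal]
    apply intervalIntegral.integral_congr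
    intro s hs
    rw [Set.uIcc_of_le hx.le] at hs
    have e1 : ((s:ℂ)) ^ ((α:ℂ)-1) = ((s ^ (α-1) : ℝ) : ℂ) := by
      rw [show ((α:ℂ)-1) = ((α-1 : ℝ):ℂ) by push_cast; ring, Complex.ofReal_cpow hs.1]
    have e2 : ((x:ℂ)-(s:ℂ)) ^ (((1-α:ℝ):ℂ)-1) = (((x-s) ^ (-α) : ℝ) : ℂ) := by
      rw [show (((1-α:ℝ):ℂ)-1) = ((-α : ℝ):ℂ) by push_cast; ring,
        show ((x:ℂ)-(s:ℂ)) = (((x-s : ℝ)):ℂ) by push_cast; ring,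
        Complex.ofReal_cpow (by linarith [hs.2] : (0:ℝ) ≤ x - s)]
    simp only [e1, e2, ← Complex.ofReal_mul]
  rw [hre] at hc
  exact_mod_cast hc

end Beta

/-- Chebyshev's integral inequality for oppositely monotone functions. -/
lemma cheb {a b : ℝ} (hab : a < b) {f g : ℝ → ℝ}
    (hf : IntegrableOn f (Set.Ioo a b)) (hg : IntegrableOn g (Set.Ioo a b))
    (hfg : IntegrableOn (fun s => f s * g s) (Set.Ioo a b))
    (hm : ∀ x ∈ Set.Ioo a b, ∀ y ∈ Set.Ioo a b, (f x - f y) * (g x - g y) ≤ 0) :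
    (b - a) * ∫ s in Set.Ioo a b, f s * g s
      ≤ (∫ s in Set.Ioo a b, f s) * ∫ s in Set.Ioo a b, g s := by
  set μ := volume.restrict (Set.Ioo a b) with hμ
  haveI : IsFiniteMeasure μ := by
    constructor
    rw [hμ, Measure.restrict_apply_univ]
    exact measure_Ioo_lt_top
  have h1 : Integrable (fun z : ℝ × ℝ => f z.1 * g z.2) (μ.prod μ) := hf.mul_prod hg
  have h2 : Integrable (fun z : ℝ × ℝ => g z.1 * f z.2) (μ.prod μ) := hg.mul_prod hf
  have h3 : Integrable (fun z : ℝ × ℝ => f z.1 * g z.1 * 1) (μ.prod μ) :=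
    hfg.mul_prod (integrable_const (1:ℝ))
  have h4 : Integrable (fun z : ℝ × ℝ => 1 * (f z.2 * g z.2)) (μ.prod μ) :=
    (integrable_const (1:ℝ)).mul_prod hfg
  have hnn : 0 ≤ ∫ z : ℝ × ℝ,
      (f z.1 * g z.2 + g z.1 * f z.2
        - (f z.1 * g z.1 * 1 + 1 * (f z.2 * g z.2))) ∂(μ.prod μ) := by
    apply integral_nonneg_of_ae
    have hprod : μ.prod μ = (volume.prod volume).restrict ((Set.Ioo a b) ×ˢ (Set.Ioo a b)) := by
      rw [hμ, Measure.prod_restrict]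
    rw [hprod]
    filter_upwards [ae_restrict_mem (measurableSet_Ioo.prod measurableSet_Ioo)] with z hz
    obtain ⟨hz1, hz2⟩ := hz
    have := hm z.1 hz1 z.2 hz2
    simp only [Pi.zero_apply]
    nlinarith [this]
  have h12 : Integrable (fun z : ℝ × ℝ => f z.1 * g z.2 + g z.1 * f z.2) (μ.prod μ) := h1.add h2
  have h34 : Integrable (fun z : ℝ × ℝ => f z.1 * g z.1 * 1 + 1 * (f z.2 * g z.2)) (μ.prod μ) :=
    h3.add h4
  rw [integral_sub h12 h34, integral_add h1 h2, integral_add h3 h4,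
    integral_prod_mul f g, integral_prod_mul g f,
    integral_prod_mul (fun s => f s * g s) (fun _ => (1:ℝ)),
    integral_prod_mul (fun _ => (1:ℝ)) (fun s => f s * g s)] at hnn
  have hone : ∫ _ : ℝ, (1:ℝ) ∂μ = b - a := by
    rw [integral_const, smul_eq_mul, mul_one, hμ, measureReal_def, Measure.restrict_apply_univ,
      Real.volume_Ioo, ENNReal.toReal_ofReal (by linarith)]
  rw [hone] at hnn
  nlinarith [hnn]

section OmegaFacts
variable {α : ℝ}

lemma omega_nonneg {μ s : ℝ} (hμ : 0 < Real.Gamma μ) (hs : 0 ≤ s) : 0 ≤ omega μ s :=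
  div_nonneg (Real.rpow_nonneg hs _) hμ.le

lemma omega_anti {μ : ℝ} (hμ : μ ≤ 1) (hΓ : 0 < Real.Gamma μ) {u v : ℝ}
    (h0 : 0 < u) (huv : u ≤ v) : omega μ v ≤ omega μ u := by
  unfold omega
  rw [div_eq_mul_inv, div_eq_mul_inv]
  exact mul_le_mul_of_nonneg_right (Real.rpow_le_rpow_of_nonpos h0 huv (by linarith))
    (inv_nonneg.mpr hΓ.le)

end OmegaFacts

lemma f_int (α : ℝ) (hα1 : α < 1) (c a b : ℝ) :
    IntervalIntegrable (fun s => omega (1-α) (c - s)) volume a b := by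
  have h := ((intervalIntegral.intervalIntegrable_rpow' (a := c-a) (b := c-b)
    (r := 1-α-1) (by linarith)).comp_sub_left c).div_const (Real.Gamma (1-α))
  simpa [omega, sub_sub_cancel] using h

lemma g_int (α : ℝ) (hα0 : 0 < α) (a b : ℝ) :
    IntervalIntegrable (fun s => omega α s) volume a b := by
  have h := (intervalIntegral.intervalIntegrable_rpow' (a := a) (b := b)
    (r := α-1) (by linarith)).div_const (Real.Gamma α)
  simpa [omega] using h


set_option maxHeartbeats 1000000 in
theorem complementary_kernels_weighted_bound
    (α T : ℝ) (hα0 : 0 < α) (hα1 : α < 1)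
    (N : ℕ) (hN : 1 ≤ N)
    (t : ℕ → ℝ) (ht0 : t 0 = 0) (htN : t N = T)
    (hmesh : ∀ k, k < N → t k < t (k + 1))
    (A : ℕ → ℕ → ℝ)
    (hApos : ∀ n k, 1 ≤ k → k ≤ n → n ≤ N → 0 < A n k)
    (hAmono : ∀ n k, 1 ≤ k → k + 1 ≤ n → n ≤ N → A n k ≤ A n (k + 1))
    (πa : ℝ) (hπa : 0 < πa)
    -- lower bound (Ass1): `A^{(n)}_{n−k} ≥ (1/π_a)(1/τ_k)∫_{t_{k−1}}^{t_k} ω_{1−α}(t_n−s) ds`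
    (hAlow : ∀ n k, 1 ≤ k → k ≤ n → n ≤ N →
      (1 / πa) * L1kernel α t n k ≤ A n k) :
    ∀ m : ℕ, m ≤ 1 → ∀ n, 1 ≤ n → n ≤ N →
      ∑ j ∈ Finset.Icc 1 n,
          compP A n (n - j) * omega (1 + m * α - α) (t j) ≤
        πa * omega (1 + m * α) (t n) := by

  intro m hm n hn1 hnN
  have hG1 : (0:ℝ) < Real.Gamma (1 - α) := Real.Gamma_pos_of_pos (by linarith)
  have hGa : (0:ℝ) < Real.Gamma α := Real.Gamma_pos_of_pos hα0
  have tlt : ∀ i j : ℕ, i < j → j ≤ N → t i < t j := mesh_lt hmesh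
  have tle : ∀ i j : ℕ, i ≤ j → j ≤ N → t i ≤ t j := by
    intro i j hij hjN
    rcases eq_or_lt_of_le hij with rfl | h
    · exact le_rfl
    · exact (tlt i j h hjN).le
  have tpos : ∀ k, 1 ≤ k → k ≤ N → 0 < t k := by
    intro k h1 h2
    have := tlt 0 k h1 h2
    rwa [ht0] at this
  have tnn : ∀ k, k ≤ N → 0 ≤ t k := by
    intro k hk
    rcases Nat.eq_zero_or_pos k with rfl | h
    · simp [ht0]
    · exact (tpos k h hk).le
  have hpnn : ∀ j, 1 ≤ j → j ≤ n → 0 ≤ compP A n (n - j) :=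
    fun j h1 h2 => compP_nonneg A N n hn1 hnN hApos hAmono (n - j) (by omega)
  have hAne : ∀ j, 1 ≤ j → j ≤ n → A j j ≠ 0 :=
    fun j h1 h2 => (hApos j j h1 le_rfl (by omega)).ne'
  have hsum1 : ∀ k, 1 ≤ k → k ≤ n →
      ∑ j ∈ Finset.Icc k n, compP A n (n - j) * A j k = 1 :=
    fun k h1 h2 => comp_sum A n hAne (n - k) k h1 (by omega)
  interval_cases m
  · -- m = 0
    simp only [Nat.cast_zero, zero_mul, add_zero]
    have hω1 : omega 1 (t n) = 1 := by
      norm_num [omega, Real.Gamma_one]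
    rw [hω1, mul_one]
    have key0 : ∀ j, 1 ≤ j → j ≤ n → omega (1 - α) (t j) ≤ πa * A j 1 := by
      intro j h1 h2
      have hjN : j ≤ N := le_trans h2 hnN
      have ht1 : 0 < t 1 := tpos 1 le_rfl (by omega)
      have htj : 0 < t j := tpos j h1 hjN
      have h1j : t 1 ≤ t j := tle 1 j h1 hjN
      have hlow := hAlow j 1 le_rfl h1 hjN
      have hL1 : L1kernel α t j 1
          = (1 / (t 1 - 0)) * ∫ s in (0:ℝ)..(t 1), omega (1 - α) (t j - s) := by
        unfold L1kernel
        norm_num [ht0]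
      have hint : (t 1 - 0) * omega (1 - α) (t j)
          ≤ ∫ s in (0:ℝ)..(t 1), omega (1 - α) (t j - s) := by
        rw [intervalIntegral.integral_of_le ht1.le, integral_Ioc_eq_integral_Ioo]
        have hconst : ∫ _ in Set.Ioo (0:ℝ) (t 1), omega (1 - α) (t j)
            = (t 1 - 0) * omega (1 - α) (t j) := by
          rw [integral_const, smul_eq_mul, measureReal_def, Measure.restrict_apply_univ,
            Real.volume_Ioo, ENNReal.toReal_ofReal (by linarith)]
        rw [← hconst]
        apply setIntegral_mono_on
        · exact integrableOn_const measure_Ioo_lt_top.ne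
        · exact (intervalIntegrable_iff_integrableOn_Ioo_of_le ht1.le).mp
            (f_int α hα1 (t j) 0 (t 1))
        · exact measurableSet_Ioo
        · intro s hs
          exact omega_anti (by linarith) hG1 (by linarith [hs.2]) (by linarith [hs.1])
      have hτ : 0 < t 1 - 0 := by linarith
      have hstep : omega (1 - α) (t j) ≤ L1kernel α t j 1 := by
        rw [hL1]
        calc omega (1 - α) (t j)
            = (1 / (t 1 - 0)) * ((t 1 - 0) * omega (1 - α) (t j)) := by field_simp
          _ ≤ (1 / (t 1 - 0)) * ∫ s in (0:ℝ)..(t 1), omega (1 - α) (t j - s) := by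
              apply mul_le_mul_of_nonneg_left hint (by positivity)
      calc omega (1 - α) (t j) ≤ L1kernel α t j 1 := hstep
        _ = πa * ((1 / πa) * L1kernel α t j 1) := by field_simp
        _ ≤ πa * A j 1 := mul_le_mul_of_nonneg_left hlow hπa.le
    calc ∑ j ∈ Finset.Icc 1 n, compP A n (n - j) * omega (1 - α) (t j)
        ≤ ∑ j ∈ Finset.Icc 1 n, compP A n (n - j) * (πa * A j 1) := by
          apply Finset.sum_le_sum
          intro j hj
          have hj' := Finset.mem_Icc.mp hj
          exact mul_le_mul_of_nonneg_left (key0 j hj'.1 hj'.2) (hpnn j hj'.1 hj'.2)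
      _ = πa * ∑ j ∈ Finset.Icc 1 n, compP A n (n - j) * A j 1 := by
          rw [Finset.mul_sum]
          apply Finset.sum_congr rfl
          intro j _; ring
      _ = πa := by rw [hsum1 1 le_rfl hn1, mul_one]
  · -- m = 1
    simp only [Nat.cast_one, one_mul, add_sub_cancel_right]
    -- the key per-`j` bound
    have key1 : ∀ j, 1 ≤ j → j ≤ N → 1 ≤ πa * ∑ k ∈ Finset.Icc 1 j,
        A j k * (omega (1+α) (t k) - omega (1+α) (t (k-1))) := by
      intro j hj1 hjN
      have hx : 0 < t j := tpos j hj1 hjN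
      have hfg_eq : (fun s => omega (1-α) (t j - s) * omega α s)
          = (fun s => s ^ (α-1) * (t j - s) ^ (-α) * (1/(Real.Gamma (1-α) * Real.Gamma α))) := by
        funext s
        unfold omega
        rw [show (1:ℝ) - α - 1 = -α by ring]
        field_simp
      have hfgx : IntervalIntegrable (fun s => omega (1-α) (t j - s) * omega α s)
          volume 0 (t j) := by
        rw [hfg_eq]
        exact (beta_integrable hα0 hα1 (t j) hx).mul_const _
      have hbval : ∫ s in (0:ℝ)..(t j), omega (1-α) (t j - s) * omega α s = 1 := by
        rw [hfg_eq, intervalIntegral.integral_mul_const, beta_value hα0 hα1 (t j) hx]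
        field_simp
      have hstep : ∀ k, 1 ≤ k → k ≤ j →
          (∫ s in (t (k-1))..(t k), omega (1-α) (t j - s) * omega α s)
            ≤ πa * (A j k * (omega (1+α) (t k) - omega (1+α) (t (k-1)))) := by
        intro k hk1 hkj
        have ha0 : 0 ≤ t (k-1) := tnn _ (by omega)
        have hab : t (k-1) < t k := tlt (k-1) k (by omega) (by omega)
        have hbx : t k ≤ t j := tle k j hkj hjN
        have hτ : 0 < t k - t (k-1) := by linarith
        have hfI : IntegrableOn (fun s => omega (1-α) (t j - s)) (Set.Ioo (t (k-1)) (t k)) :=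
          (intervalIntegrable_iff_integrableOn_Ioo_of_le hab.le).mp (f_int α hα1 (t j) _ _)
        have hgI : IntegrableOn (fun s => omega α s) (Set.Ioo (t (k-1)) (t k)) :=
          (intervalIntegrable_iff_integrableOn_Ioo_of_le hab.le).mp (g_int α hα0 _ _)
        have hfgI : IntegrableOn (fun s => omega (1-α) (t j - s) * omega α s)
            (Set.Ioo (t (k-1)) (t k)) := by
          have hbig := (intervalIntegrable_iff_integrableOn_Ioo_of_le hx.le).mp hfgx
          exact hbig.mono_set (Set.Ioo_subset_Ioo ha0 hbx)
        have hmono : ∀ u ∈ Set.Ioo (t (k-1)) (t k), ∀ v ∈ Set.Ioo (t (k-1)) (t k),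
            (omega (1-α) (t j - u) - omega (1-α) (t j - v)) * (omega α u - omega α v) ≤ 0 := by
          intro u hu v hv
          have hu0 : 0 < u := lt_of_le_of_lt ha0 hu.1
          have hv0 : 0 < v := lt_of_le_of_lt ha0 hv.1
          have hux : u < t j := lt_of_lt_of_le hu.2 hbx
          have hvx : v < t j := lt_of_lt_of_le hv.2 hbx
          rcases le_total u v with h | h
          · have hf := omega_anti (by linarith : (1:ℝ)-α ≤ 1) hG1
              (by linarith : 0 < t j - v) (by linarith : t j - v ≤ t j - u)
            have hg := omega_anti (by linarith : α ≤ 1) hGa hu0 h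
            nlinarith [hf, hg]
          · have hf := omega_anti (by linarith : (1:ℝ)-α ≤ 1) hG1
              (by linarith : 0 < t j - u) (by linarith : t j - u ≤ t j - v)
            have hg := omega_anti (by linarith : α ≤ 1) hGa hv0 h
            nlinarith [hf, hg]
        have hcheb := cheb hab hfI hgI hfgI hmono
        have hFval : ∫ s in Set.Ioo (t (k-1)) (t k), omega (1-α) (t j - s)
            = ∫ s in (t (k-1))..(t k), omega (1-α) (t j - s) := by
          rw [intervalIntegral.integral_of_le hab.le, integral_Ioc_eq_integral_Ioo]
        have hGval : ∫ s in Set.Ioo (t (k-1)) (t k), omega α s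
            = omega (1+α) (t k) - omega (1+α) (t (k-1)) := by
          rw [← integral_Ioc_eq_integral_Ioo, ← intervalIntegral.integral_of_le hab.le]
          unfold omega
          rw [intervalIntegral.integral_div, integral_rpow (Or.inl (by linarith))]
          rw [show α - 1 + 1 = α by ring, show (1:ℝ) + α - 1 = α by ring,
            show (1:ℝ) + α = α + 1 by ring, Real.Gamma_add_one hα0.ne']
          field_simp
        have hIval : ∫ s in Set.Ioo (t (k-1)) (t k), omega (1-α) (t j - s) * omega α s
            = ∫ s in (t (k-1))..(t k), omega (1-α) (t j - s) * omega α s := by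
          rw [intervalIntegral.integral_of_le hab.le, integral_Ioc_eq_integral_Ioo]
        rw [hFval, hGval, hIval] at hcheb
        set F := ∫ s in (t (k-1))..(t k), omega (1-α) (t j - s) with hFdef
        set G := omega (1+α) (t k) - omega (1+α) (t (k-1)) with hGdef
        set I := ∫ s in (t (k-1))..(t k), omega (1-α) (t j - s) * omega α s with hIdef
        have hG0 : 0 ≤ G := by
          rw [← hGval]
          apply setIntegral_nonneg measurableSet_Ioo
          intro s hs
          exact omega_nonneg hGa (by linarith [hs.1])
        have hlow := hAlow j k hk1 hkj hjN
        have hL1 : L1kernel α t j k = (1 / (t k - t (k-1))) * F := rfl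
        have hAk2 : F ≤ πa * (t k - t (k-1)) * A j k := by
          calc F = (πa * (t k - t (k-1))) * ((1/πa) * ((1 / (t k - t (k-1))) * F)) := by
                field_simp
            _ ≤ (πa * (t k - t (k-1))) * A j k := by
                apply mul_le_mul_of_nonneg_left _ (by positivity)
                rw [← hL1]; exact hlow
            _ = πa * (t k - t (k-1)) * A j k := by ring
        have h5 : (t k - t (k-1)) * I ≤ (t k - t (k-1)) * (πa * (A j k * G)) := by
          have h4 : F * G ≤ (πa * (t k - t (k-1)) * A j k) * G :=
            mul_le_mul_of_nonneg_right hAk2 hG0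
          nlinarith [hcheb, h4]
        exact le_of_mul_le_mul_left h5 hτ
      -- sum the steps over k
      have hadj : ∀ kk, kk < j → IntervalIntegrable
          (fun s => omega (1-α) (t j - s) * omega α s) volume (t kk) (t (kk+1)) := by
        intro kk hkk
        apply hfgx.mono_set
        rw [Set.uIcc_of_le hx.le, Set.uIcc_of_le (tle kk (kk+1) (by omega) (by omega))]
        exact Set.Icc_subset_Icc (tnn kk (by omega)) (tle (kk+1) j (by omega) hjN)
      have hLHS : ∑ k ∈ Finset.Icc 1 j,
          (∫ s in (t (k-1))..(t k), omega (1-α) (t j - s) * omega α s) = 1 := by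
        have hshift := sum_Icc_shift
          (fun k => ∫ s in (t (k-1))..(t k), omega (1-α) (t j - s) * omega α s) j
        rw [hshift]
        simp only [Nat.add_sub_cancel]
        rw [intervalIntegral.sum_integral_adjacent_intervals hadj, ht0, hbval]
      have hfin : (1:ℝ) ≤ ∑ k ∈ Finset.Icc 1 j,
          πa * (A j k * (omega (1+α) (t k) - omega (1+α) (t (k-1)))) := by
        calc (1:ℝ) = ∑ k ∈ Finset.Icc 1 j,
            (∫ s in (t (k-1))..(t k), omega (1-α) (t j - s) * omega α s) := hLHS.symm
          _ ≤ _ := by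
            apply Finset.sum_le_sum
            intro k hk
            have hk' := Finset.mem_Icc.mp hk
            exact hstep k hk'.1 hk'.2
      calc (1:ℝ) ≤ ∑ k ∈ Finset.Icc 1 j,
          πa * (A j k * (omega (1+α) (t k) - omega (1+α) (t (k-1)))) := hfin
        _ = πa * ∑ k ∈ Finset.Icc 1 j,
            A j k * (omega (1+α) (t k) - omega (1+α) (t (k-1))) := by
          rw [Finset.mul_sum]
    -- main chain for m = 1
    have hω1 : ∀ s : ℝ, omega 1 s = 1 := by
      intro s; norm_num [omega, Real.Gamma_one]
    have hchain : ∑ j ∈ Finset.Icc 1 n, compP A n (n - j) * omega 1 (t j)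
        ≤ ∑ j ∈ Finset.Icc 1 n, ∑ k ∈ Finset.Icc 1 j,
          πa * (compP A n (n - j) * (A j k * (omega (1+α) (t k) - omega (1+α) (t (k-1))))) := by
      apply Finset.sum_le_sum
      intro j hj
      have hj' := Finset.mem_Icc.mp hj
      have hkey := key1 j hj'.1 (le_trans hj'.2 hnN)
      have hp := hpnn j hj'.1 hj'.2
      calc compP A n (n - j) * omega 1 (t j) = compP A n (n - j) * 1 := by rw [hω1]
        _ ≤ compP A n (n - j) * (πa * ∑ k ∈ Finset.Icc 1 j,
              A j k * (omega (1+α) (t k) - omega (1+α) (t (k-1)))) :=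
            mul_le_mul_of_nonneg_left hkey hp
        _ = ∑ k ∈ Finset.Icc 1 j,
              πa * (compP A n (n - j) * (A j k * (omega (1+α) (t k) - omega (1+α) (t (k-1))))) := by
            simp only [Finset.mul_sum]
            exact Finset.sum_congr rfl (fun k _ => by ring)
    have hswap : ∑ j ∈ Finset.Icc 1 n, ∑ k ∈ Finset.Icc 1 j,
          πa * (compP A n (n - j) * (A j k * (omega (1+α) (t k) - omega (1+α) (t (k-1)))))
        = ∑ k ∈ Finset.Icc 1 n, ∑ j ∈ Finset.Icc k n,
          πa * (compP A n (n - j) * (A j k * (omega (1+α) (t k) - omega (1+α) (t (k-1)))))  := by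
      apply Finset.sum_comm'
      intro x y
      simp only [Finset.mem_Icc]
      omega
    have hinner : ∀ k ∈ Finset.Icc 1 n,
        ∑ j ∈ Finset.Icc k n,
          πa * (compP A n (n - j) * (A j k * (omega (1+α) (t k) - omega (1+α) (t (k-1)))))
        = πa * (omega (1+α) (t k) - omega (1+α) (t (k-1))) := by
      intro k hk
      have hk' := Finset.mem_Icc.mp hk
      have : ∑ j ∈ Finset.Icc k n,
          πa * (compP A n (n - j) * (A j k * (omega (1+α) (t k) - omega (1+α) (t (k-1)))))
          = πa * (omega (1+α) (t k) - omega (1+α) (t (k-1)))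
            * ∑ j ∈ Finset.Icc k n, compP A n (n - j) * A j k := by
        rw [Finset.mul_sum]
        apply Finset.sum_congr rfl
        intro j _; ring
      rw [this, hsum1 k hk'.1 hk'.2, mul_one]
    have htel : ∑ k ∈ Finset.Icc 1 n,
        (omega (1+α) (t k) - omega (1+α) (t (k-1))) = omega (1+α) (t n) := by
      have hshift := sum_Icc_shift
        (fun k => omega (1+α) (t k) - omega (1+α) (t (k-1))) n
      rw [hshift]
      simp only [Nat.add_sub_cancel]
      rw [Finset.sum_range_sub (fun i => omega (1+α) (t i)) n]
      have h0 : omega (1+α) (t 0) = 0 := by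
        rw [ht0]
        unfold omega
        rw [show (1:ℝ) + α - 1 = α by ring, Real.zero_rpow hα0.ne', zero_div]
      rw [h0, sub_zero]
    calc ∑ j ∈ Finset.Icc 1 n, compP A n (n - j) * omega 1 (t j)
        ≤ ∑ j ∈ Finset.Icc 1 n, ∑ k ∈ Finset.Icc 1 j,
          πa * (compP A n (n - j) * (A j k * (omega (1+α) (t k) - omega (1+α) (t (k-1))))) := hchain
      _ = ∑ k ∈ Finset.Icc 1 n, ∑ j ∈ Finset.Icc k n,
          πa * (compP A n (n - j) * (A j k * (omega (1+α) (t k) - omega (1+α) (t (k-1))))) := hswap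
      _ = ∑ k ∈ Finset.Icc 1 n, πa * (omega (1+α) (t k) - omega (1+α) (t (k-1))) :=
          Finset.sum_congr rfl hinner
      _ = πa * ∑ k ∈ Finset.Icc 1 n, (omega (1+α) (t k) - omega (1+α) (t (k-1))) := by
          rw [Finset.mul_sum]
      _ = πa * omega (1+α) (t n) := by rw [htel]
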